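/- For every Sturmian word ω over {0,1} and every integer k ≥ 1, there exist two positive integers ℓ₁ and ℓ₂ such that for every position i ≥ 0, the suffix of ω starting at position i begins in an abelian k-power with abelian period ℓ₁ or with abelian period ℓ₂. -/

import Mathlib

/-- The factor of the infinite word `ω` of length `n` starting at position `i`. -/
def factor {A : Type*} (ω : ℕ → A) (i n : ℕ) : List A :=
  (List.range n).map fun j => ω (i + j)

/-- `ω` is `C`-balanced. -/
def IsCBalanced {A : Type*} [DecidableEq A] (ω : ℕ → A) (C : ℕ) : Prop :=
  ∀ a : A, ∀ n i j : ℕ,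
    |((factor ω i n).count a : ℤ) - ((factor ω j n).count a : ℤ)| ≤ (C : ℤ)

/-- `ω` is ultimately periodic. -/
def UltimatelyPeriodic {A : Type*} (ω : ℕ → A) : Prop :=
  ∃ m p : ℕ, 0 < p ∧ ∀ n : ℕ, m ≤ n → ω (n + p) = ω n

/-- The word `ω` has an abelian `k`-power with abelian period `ℓ > 0` starting at
position `i`. -/
def AbelianPowerAt {A : Type*} [DecidableEq A] (ω : ℕ → A) (i k ℓ : ℕ) : Prop :=
  0 < ℓ ∧ ∀ j₁ j₂ : ℕ, j₁ < k → j₂ < k → ∀ a : A,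
    (factor ω (i + j₁ * ℓ) ℓ).count a = (factor ω (i + j₂ * ℓ) ℓ).count a

set_option linter.unusedSectionVars false
set_option linter.unusedVariables false
set_option linter.unusedTactic false

namespace StAux2

variable (α : ℝ) (hirr : ∀ ℓ : ℕ, 0 < ℓ → ∀ P : ℤ, (ℓ : ℝ) * α ≠ P)
include hirr

lemma fract_pos (ℓ : ℕ) (hℓ : 0 < ℓ) : 0 < Int.fract ((ℓ : ℝ) * α) := by
  rcases lt_or_eq_of_le (Int.fract_nonneg ((ℓ : ℝ) * α)) with h | h
  · exact h
  · exfalso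
    apply hirr ℓ hℓ ⌊(ℓ : ℝ) * α⌋
    have := Int.floor_add_fract ((ℓ : ℝ) * α)
    rw [← h] at this
    linarith

lemma exists_one_side (ε : ℝ) (hε : 0 < ε) (hε2 : ε ≤ 1/2) :
    ∃ ℓ : ℕ, 0 < ℓ ∧
      (Int.fract ((ℓ : ℝ) * α) < ε ∨ 1 - ε < Int.fract ((ℓ : ℝ) * α)) := by
  obtain ⟨n, hn⟩ := exists_nat_gt (1 / ε)
  obtain ⟨j, kk, hk0, hkn, hjk⟩ := Real.exists_int_int_abs_mul_sub_le α (n := n + 1) (by omega)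
  set ℓ := kk.toNat with hℓdef
  have hℓpos : 0 < ℓ := by omega
  have hℓcast : ((ℓ : ℕ) : ℝ) = (kk : ℝ) := by
    have : ((ℓ : ℕ) : ℤ) = kk := Int.toNat_of_nonneg (by omega)
    exact_mod_cast this
  refine ⟨ℓ, hℓpos, ?_⟩
  set x := (ℓ : ℝ) * α with hx
  have hxk : x = (kk : ℝ) * α := by rw [hx, hℓcast]
  have hsmall : |x - j| < ε := by
    rw [hxk]
    have h1 : (0:ℝ) < 1 / ε := by positivity
    have hn' : 1 / ε < (n:ℝ) := hn
    have : (1:ℝ) / (↑(n+1) + 1) < ε := by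
      rw [div_lt_iff₀ (by positivity)]
      rw [div_lt_iff₀ (by positivity)] at hn'
      push_cast
      nlinarith
    calc |(kk:ℝ) * α - j| ≤ 1 / (↑(n+1) + 1) := hjk
    _ < ε := this
  have hf0 : 0 < Int.fract x := fract_pos α hirr ℓ hℓpos
  have hf1 : Int.fract x < 1 := Int.fract_lt_one x
  have hfl := Int.floor_add_fract x
  set d : ℤ := ⌊x⌋ - j with hd
  have habs : |Int.fract x + (d : ℝ)| < ε := by
    have : Int.fract x + (d : ℝ) = x - j := by push_cast [hd]; linarith
    rw [this]; exact hsmall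
  rw [abs_lt] at habs
  have hdval : d = 0 ∨ d = -1 := by
    have h1 : (-2 : ℝ) < (d : ℝ) := by linarith
    have h2 : (d : ℝ) < 1 := by linarith
    have h1' : (-2 : ℤ) < d := by exact_mod_cast h1
    have h2' : d < 1 := by exact_mod_cast h2
    omega
  rcases hdval with hdv | hdv
  · left
    rw [hdv] at habs
    push_cast at habs
    linarith [habs.2]
  · right
    rw [hdv] at habs
    push_cast at habs
    linarith [habs.1]

-- from a small fract produce a large one, and vice versa
lemma small_to_large (ε : ℝ) (hε : 0 < ε) (hε2 : ε ≤ 1/2) (ℓ : ℕ) (hℓ : 0 < ℓ)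
    (hsm : Int.fract ((ℓ : ℝ) * α) < ε) :
    ∃ ℓ₂ : ℕ, 0 < ℓ₂ ∧ 1 - ε < Int.fract ((ℓ₂ : ℝ) * α) := by
  classical
  set d := Int.fract ((ℓ : ℝ) * α) with hd
  have hd0 : 0 < d := fract_pos α hirr ℓ hℓ
  have hex : ∃ m : ℕ, 1 - ε < m * d := by
    obtain ⟨m, hm⟩ := exists_nat_gt ((1 - ε) / d)
    exact ⟨m, by rw [div_lt_iff₀ hd0] at hm; linarith⟩
  set m := Nat.find hex with hm
  have hm1 : 1 - ε < m * d := Nat.find_spec hex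
  have hmpos : 0 < m := by
    rcases Nat.eq_zero_or_pos m with h0 | h
    · exfalso; rw [h0] at hm1; push_cast at hm1; linarith
    · exact h
  have hmlt : (m : ℝ) * d < 1 := by
    have hprev : ¬ (1 - ε < ((m - 1 : ℕ) : ℝ) * d) := Nat.find_min hex (by omega)
    push_neg at hprev
    have : ((m - 1 : ℕ) : ℝ) = (m : ℝ) - 1 := by
      have : (1:ℕ) ≤ m := hmpos
      push_cast [Nat.cast_sub this]
      ring
    rw [this] at hprev
    nlinarith
  refine ⟨m * ℓ, by positivity, ?_⟩
  have hcalc : ((m * ℓ : ℕ) : ℝ) * α = ((m : ℤ) * ⌊(ℓ : ℝ) * α⌋ : ℤ) + (m : ℝ) * d := by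
    have hkey : (m : ℝ) * ((ℓ:ℝ) * α - (⌊(ℓ : ℝ) * α⌋ : ℝ) - d) = 0 := by
      have h0 : (ℓ:ℝ) * α - (⌊(ℓ : ℝ) * α⌋ : ℝ) - d = 0 := by
        rw [hd]; linarith [Int.floor_add_fract ((ℓ : ℝ) * α)]
      rw [h0, mul_zero]
    push_cast
    linear_combination hkey
  rw [hcalc, Int.fract_intCast_add]
  rw [Int.fract_eq_self.2 ⟨by positivity, hmlt⟩]
  exact hm1

lemma large_to_small (ε : ℝ) (hε : 0 < ε) (hε2 : ε ≤ 1/2) (ℓ : ℕ) (hℓ : 0 < ℓ)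
    (hlg : 1 - ε < Int.fract ((ℓ : ℝ) * α)) :
    ∃ ℓ₁ : ℕ, 0 < ℓ₁ ∧ Int.fract ((ℓ₁ : ℝ) * α) < ε := by
  classical
  set e := 1 - Int.fract ((ℓ : ℝ) * α) with he
  have he0 : 0 < e := by
    have := Int.fract_lt_one ((ℓ : ℝ) * α)
    simp [he]; linarith
  have heε : e < ε := by simp [he]; linarith
  have hex : ∃ m : ℕ, 1 - ε < m * e := by
    obtain ⟨m, hm⟩ := exists_nat_gt ((1 - ε) / e)
    exact ⟨m, by rw [div_lt_iff₀ he0] at hm; linarith⟩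
  set m := Nat.find hex with hm
  have hm1 : 1 - ε < m * e := Nat.find_spec hex
  have hmpos : 0 < m := by
    rcases Nat.eq_zero_or_pos m with h0 | h
    · exfalso; rw [h0] at hm1; push_cast at hm1; linarith
    · exact h
  have hmlt : (m : ℝ) * e < 1 := by
    have hprev : ¬ (1 - ε < ((m - 1 : ℕ) : ℝ) * e) := Nat.find_min hex (by omega)
    push_neg at hprev
    have : ((m - 1 : ℕ) : ℝ) = (m : ℝ) - 1 := by
      have : (1:ℕ) ≤ m := hmpos
      push_cast [Nat.cast_sub this]
      ring
    rw [this] at hprev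
    nlinarith
  refine ⟨m * ℓ, by positivity, ?_⟩
  have hcalc : ((m * ℓ : ℕ) : ℝ) * α = ((m : ℤ) * (⌊(ℓ : ℝ) * α⌋ + 1) : ℤ) + (-(m : ℝ) * e) := by
    have hkey : (m : ℝ) * ((ℓ:ℝ) * α - (⌊(ℓ : ℝ) * α⌋ : ℝ) - 1 + e) = 0 := by
      have h0 : (ℓ:ℝ) * α - (⌊(ℓ : ℝ) * α⌋ : ℝ) - 1 + e = 0 := by
        rw [he]; linarith [Int.floor_add_fract ((ℓ : ℝ) * α)]
      rw [h0, mul_zero]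
    push_cast
    linear_combination hkey
  rw [hcalc, Int.fract_intCast_add]
  have hme : Int.fract ((m:ℝ) * e) = (m:ℝ) * e := Int.fract_eq_self.2 ⟨by positivity, hmlt⟩
  have hne : Int.fract ((m:ℝ) * e) ≠ 0 := by rw [hme]; nlinarith
  rw [show (-(m : ℝ) * e) = -((m:ℝ) * e) by ring, Int.fract_neg hne, hme]
  linarith

lemma exists_both (ε : ℝ) (hε : 0 < ε) (hε2 : ε ≤ 1/2) :
    ∃ ℓ₁ ℓ₂ : ℕ, 0 < ℓ₁ ∧ 0 < ℓ₂ ∧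
      Int.fract ((ℓ₁ : ℝ) * α) < ε ∧ 1 - ε < Int.fract ((ℓ₂ : ℝ) * α) := by
  obtain ⟨ℓ, hℓ, hside⟩ := exists_one_side α hirr ε hε hε2
  rcases hside with h | h
  · obtain ⟨ℓ₂, h2, h2'⟩ := small_to_large α hirr ε hε hε2 ℓ hℓ h
    exact ⟨ℓ, ℓ₂, hℓ, h2, h, h2'⟩
  · obtain ⟨ℓ₁, h1, h1'⟩ := large_to_small α hirr ε hε hε2 ℓ hℓ h
    exact ⟨ℓ₁, ℓ, h1, hℓ, h1', h⟩

end StAux2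


namespace StAux

variable (ω : ℕ → Fin 2)

def W (i n : ℕ) : ℕ := (factor ω i n).count 1

lemma factor_add (i a b : ℕ) :
    factor ω i (a + b) = factor ω i a ++ factor ω (i + a) b := by
  unfold factor
  rw [List.range_add, List.map_append, List.map_map]
  congr 1
  apply List.map_congr_left
  intro j _
  simp [Function.comp, add_assoc]

lemma W_add (i a b : ℕ) : W ω i (a + b) = W ω i a + W ω (i + a) b := by
  unfold W
  rw [factor_add, List.count_append]

lemma W_one (m : ℕ) : W ω m 1 = if ω m = 1 then 1 else 0 := by
  unfold W factor
  simp [List.range_succ, List.count_singleton]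

lemma count_zero_add_count_one (L : List (Fin 2)) :
    L.count 0 + L.count 1 = L.length := by
  induction L with
  | nil => simp
  | cons x t ih =>
    fin_cases x <;> simp [List.count_cons, ih] <;> omega


lemma W_mul (i m ℓ : ℕ) : W ω i (m * ℓ) = ∑ j ∈ Finset.range m, W ω (i + j * ℓ) ℓ := by
  induction m with
  | zero => simp [W, factor]
  | succ m ih =>
    have : (m + 1) * ℓ = m * ℓ + ℓ := by ring
    rw [this, W_add, ih, Finset.sum_range_succ]



lemma eq_of_W_one_eq (m m' : ℕ) (h : W ω m 1 = W ω m' 1) : ω m = ω m' := by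
  rw [W_one, W_one] at h
  have h1 := (ω m).isLt
  have h2 := (ω m').isLt
  apply Fin.ext
  have e1 : ω m = 1 ↔ (ω m).val = 1 := by
    constructor
    · intro h'; rw [h']; rfl
    · intro h'; exact Fin.ext h'
  have e2 : ω m' = 1 ↔ (ω m').val = 1 := by
    constructor
    · intro h'; rw [h']; rfl
    · intro h'; exact Fin.ext h'
  split_ifs at h with hx hy hy <;> rw [e1] at hx <;> rw [e2] at * <;> omega



lemma factor_length (i n : ℕ) : (factor ω i n).length = n := by simp [factor]

noncomputable def gmin (n : ℕ) : ℕ := sInf (Set.range fun i => W ω i n)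

lemma gmin_le (i n : ℕ) : gmin ω n ≤ W ω i n := Nat.sInf_le ⟨i, rfl⟩

lemma exists_gmin (n : ℕ) : ∃ i, W ω i n = gmin ω n := by
  have : gmin ω n ∈ Set.range fun i => W ω i n :=
    Nat.sInf_mem (Set.range_nonempty _)
  exact this

variable (hbal : IsCBalanced ω 1)
include hbal

lemma W_le_gmin_add (i n : ℕ) : W ω i n ≤ gmin ω n + 1 := by
  obtain ⟨i₀, h₀⟩ := exists_gmin ω n
  have := hbal 1 n i i₀
  unfold W at *
  rw [abs_le] at this
  omega


lemma gmin_super (a b : ℕ) : gmin ω a + gmin ω b ≤ gmin ω (a + b) := by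
  obtain ⟨i₀, h₀⟩ := exists_gmin ω (a + b)
  have h := W_add ω i₀ a b
  have h1 := gmin_le ω i₀ a
  have h2 := gmin_le ω (i₀ + a) b
  omega

lemma gmin_sub (a b : ℕ) : gmin ω (a + b) ≤ gmin ω a + gmin ω b + 1 := by
  obtain ⟨i₀, h₀⟩ := exists_gmin ω a
  have h := W_add ω i₀ a b
  have h1 := gmin_le ω i₀ (a + b)
  have h2 := W_le_gmin_add ω hbal (i₀ + a) b
  omega

lemma gmin_mul_lower (m n : ℕ) : m * gmin ω n ≤ gmin ω (m * n) := by
  induction m with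
  | zero => simp
  | succ m ih =>
    have := gmin_super ω hbal (m * n) n
    calc (m + 1) * gmin ω n = m * gmin ω n + gmin ω n := by ring
    _ ≤ gmin ω (m * n) + gmin ω n := by omega
    _ ≤ gmin ω (m * n + n) := this
    _ = gmin ω ((m + 1) * n) := by ring_nf

lemma gmin_mul_upper (m n : ℕ) (hm : 0 < m) : gmin ω (m * n) + 1 ≤ m * (gmin ω n + 1) := by
  induction m with
  | zero => omega
  | succ m ih =>
    rcases Nat.eq_zero_or_pos m with rfl | hm'
    · simp
    · have h := gmin_sub ω hbal (m * n) n
      have := ih hm'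
      calc gmin ω ((m + 1) * n) + 1 = gmin ω (m * n + n) + 1 := by ring_nf
      _ ≤ gmin ω (m * n) + gmin ω n + 2 := by omega
      _ ≤ (m + 1) * (gmin ω n + 1) := by nlinarith [this]

noncomputable def alpha : ℝ := sInf {x : ℝ | ∃ n : ℕ, 0 < n ∧ x = (gmin ω n + 1) / n}

omit hbal in
lemma alphaSet_nonempty : {x : ℝ | ∃ n : ℕ, 0 < n ∧ x = (gmin ω n + 1) / n}.Nonempty :=
  ⟨(gmin ω 1 + 1) / 1, 1, one_pos, by norm_num⟩

omit hbal in
lemma alphaSet_bdd : BddBelow {x : ℝ | ∃ n : ℕ, 0 < n ∧ x = (gmin ω n + 1) / n} := by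
  refine ⟨0, fun x hx => ?_⟩
  obtain ⟨n, hn, rfl⟩ := hx
  positivity

lemma alpha_le (n : ℕ) (hn : 0 < n) : (n : ℝ) * alpha ω ≤ gmin ω n + 1 := by
  have h : alpha ω ≤ ((gmin ω n : ℝ) + 1) / n := csInf_le (alphaSet_bdd ω) ⟨n, hn, rfl⟩
  have hn' : (0:ℝ) < n := by exact_mod_cast hn
  calc (n:ℝ) * alpha ω ≤ n * ((gmin ω n + 1)/n) := by nlinarith
  _ = gmin ω n + 1 := by field_simp

lemma le_alpha (n : ℕ) (hn : 0 < n) : (gmin ω n : ℝ) ≤ n * alpha ω := by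
  have key : ∀ x ∈ {x : ℝ | ∃ m : ℕ, 0 < m ∧ x = (gmin ω m + 1) / m},
      (gmin ω n : ℝ) / n ≤ x := by
    rintro x ⟨m, hm, rfl⟩
    have h1 := gmin_mul_lower ω hbal m n
    have h2 := gmin_mul_upper ω hbal n m hn
    have hc : gmin ω (n * m) = gmin ω (m * n) := by rw [Nat.mul_comm]
    have hkey : (m : ℝ) * gmin ω n < n * (gmin ω m + 1) := by
      have : (m * gmin ω n : ℕ) < (n * (gmin ω m + 1) : ℕ) := by omega
      exact_mod_cast this
    have hm' : (0:ℝ) < m := by exact_mod_cast hm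
    have hn' : (0:ℝ) < n := by exact_mod_cast hn
    rw [div_le_div_iff₀ hn' hm']
    push_cast
    push_cast at hkey
    nlinarith
  have h : (gmin ω n : ℝ) / n ≤ alpha ω := le_csInf (alphaSet_nonempty ω) key
  have hn' : (0:ℝ) < n := by exact_mod_cast hn
  calc (gmin ω n : ℝ) = n * ((gmin ω n)/n) := by field_simp
  _ ≤ n * alpha ω := by nlinarith

lemma W_near (i n : ℕ) : |(W ω i n : ℝ) - n * alpha ω| ≤ 1 := by
  rcases Nat.eq_zero_or_pos n with rfl | hn
  · have : W ω i 0 = 0 := by simp [W, factor]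
    simp [this]
  · have h1 := le_alpha ω hbal n hn
    have h2 := alpha_le ω hbal n hn
    have h3 := gmin_le ω i n
    have h4 := W_le_gmin_add ω hbal i n
    have h3' : (gmin ω n : ℝ) ≤ W ω i n := by exact_mod_cast h3
    have h4' : (W ω i n : ℝ) ≤ gmin ω n + 1 := by exact_mod_cast h4
    rw [abs_le]; constructor <;> linarith

lemma W_pair (i a b : ℕ) :
    |((W ω i a : ℝ) - W ω i b) - ((a : ℝ) - b) * alpha ω| ≤ 1 := by
  rcases le_total b a with h | h
  · obtain ⟨c, rfl⟩ := Nat.exists_eq_add_of_le h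
    have hn := W_near ω hbal (i + b) c
    rw [W_add ω i b c]
    convert hn using 2
    push_cast
    ring
  · obtain ⟨c, rfl⟩ := Nat.exists_eq_add_of_le h
    have hn := W_near ω hbal (i + a) c
    rw [W_add ω i a c, abs_sub_comm]
    convert hn using 2
    push_cast
    ring


lemma alpha_not_int (hap : ¬ UltimatelyPeriodic ω) :
    ∀ ℓ : ℕ, 0 < ℓ → ∀ P : ℤ, (ℓ : ℝ) * alpha ω ≠ P := by
  intro ℓ hℓ P hP
  -- P is gmin ℓ or gmin ℓ + 1
  have hg1 : ((gmin ω ℓ : ℤ) : ℝ) ≤ (P : ℝ) := by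
    rw [← hP]; exact_mod_cast le_alpha ω hbal ℓ hℓ
  have hg2 : (P : ℝ) ≤ ((gmin ω ℓ : ℤ) : ℝ) + 1 := by
    rw [← hP]; exact_mod_cast alpha_le ω hbal ℓ hℓ
  have hg1' : (gmin ω ℓ : ℤ) ≤ P := by exact_mod_cast hg1
  have hg2' : P ≤ (gmin ω ℓ : ℤ) + 1 := by exact_mod_cast hg2
  -- the key sum bound
  have key : ∀ i m : ℕ, |(W ω i (m * ℓ) : ℤ) - m * P| ≤ 1 := by
    intro i m
    have h := W_near ω hbal i (m * ℓ)
    have e : ((m * ℓ : ℕ) : ℝ) * alpha ω = m * ((ℓ:ℝ) * alpha ω) := by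
      push_cast; ring
    rw [e, hP] at h
    have : |((W ω i (m * ℓ) : ℤ) : ℝ) - ((m * P : ℤ) : ℝ)| ≤ 1 := by
      push_cast
      push_cast at h
      convert h using 2
    exact_mod_cast this
  -- eventually constant value on each residue class
  have hconst : ∃ c : ℕ, ((c : ℤ) = P) ∧ ∀ i : ℕ, ∃ N : ℕ, ∀ j : ℕ, N ≤ j →
      W ω (i + j * ℓ) ℓ = c := by
    have two_val : ∀ n, W ω n ℓ = gmin ω ℓ ∨ W ω n ℓ = gmin ω ℓ + 1 := by
      intro n
      have := gmin_le ω n ℓ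
      have := W_le_gmin_add ω hbal n ℓ
      omega
    -- at most one exception per class lemma, in both cases
    rcases (by omega : P = (gmin ω ℓ : ℤ) ∨ P = (gmin ω ℓ : ℤ) + 1) with hc | hc
    · refine ⟨gmin ω ℓ, by omega, ?_⟩
      intro i
      have one_exc : ∀ j1 j2 : ℕ, j1 < j2 → W ω (i + j1 * ℓ) ℓ ≠ gmin ω ℓ →
          W ω (i + j2 * ℓ) ℓ ≠ gmin ω ℓ → False := by
        intro j1 j2 hlt hn1 hn2
        set g := gmin ω ℓ with hg
        set m := j2 + 1 with hm
        have hsum := W_mul ω i m ℓ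
        have hlower : ∀ j ∈ Finset.range m,
            g + ((if j = j1 then 1 else 0) + (if j = j2 then 1 else 0)) ≤ W ω (i + j * ℓ) ℓ := by
          intro j _
          have hWg := gmin_le ω (i + j * ℓ) ℓ
          have hb1 : j = j1 → g + 1 ≤ W ω (i + j1 * ℓ) ℓ := by
            intro _; have := gmin_le ω (i + j1 * ℓ) ℓ; omega
          have hb2 : j = j2 → g + 1 ≤ W ω (i + j2 * ℓ) ℓ := by
            intro _; have := gmin_le ω (i + j2 * ℓ) ℓ; omega
          split_ifs with h1 h2 h2 <;> subst_vars <;> simp_all <;> omega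
        have hsum_ge : ∑ j ∈ Finset.range m,
            (g + ((if j = j1 then 1 else 0) + (if j = j2 then 1 else 0)))
            ≤ ∑ j ∈ Finset.range m, W ω (i + j * ℓ) ℓ := Finset.sum_le_sum hlower
        have hev : ∑ j ∈ Finset.range m,
            (g + ((if j = j1 then 1 else 0) + (if j = j2 then 1 else 0))) = m * g + 2 := by
          rw [Finset.sum_add_distrib, Finset.sum_add_distrib, Finset.sum_const,
            Finset.sum_ite_eq' (Finset.range m) j1 (fun _ => 1),
            Finset.sum_ite_eq' (Finset.range m) j2 (fun _ => 1)]
          have hj1 : j1 ∈ Finset.range m := Finset.mem_range.2 (by omega)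
          have hj2 : j2 ∈ Finset.range m := Finset.mem_range.2 (by omega)
          simp [hj1, hj2, Finset.card_range, Nat.mul_comm]
        have hk := key i m
        rw [abs_le] at hk
        rw [hsum] at hk
        have : (∑ j ∈ Finset.range m, W ω (i + j * ℓ) ℓ : ℤ) ≥ m * g + 2 := by
          exact_mod_cast hev ▸ hsum_ge
        have : ((m : ℤ) * P) = m * g := by rw [hc]
        push_cast at *
        omega
      by_cases hex : ∃ j, W ω (i + j * ℓ) ℓ ≠ gmin ω ℓ
      · obtain ⟨j0, hj0⟩ := hex
        exact ⟨j0 + 1, fun j hj => by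
          by_contra hne
          exact one_exc j0 j (by omega) hj0 hne⟩
      · push_neg at hex
        exact ⟨0, fun j _ => hex j⟩
    · refine ⟨gmin ω ℓ + 1, by omega, ?_⟩
      intro i
      have one_exc : ∀ j1 j2 : ℕ, j1 < j2 → W ω (i + j1 * ℓ) ℓ ≠ gmin ω ℓ + 1 →
          W ω (i + j2 * ℓ) ℓ ≠ gmin ω ℓ + 1 → False := by
        intro j1 j2 hlt hn1 hn2
        set g := gmin ω ℓ with hg
        set m := j2 + 1 with hm
        have hsum := W_mul ω i m ℓ
        have hupper : ∀ j ∈ Finset.range m,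
            (W ω (i + j * ℓ) ℓ : ℤ) ≤ ((g : ℤ) + 1)
              - (if j = j1 then 1 else 0) - (if j = j2 then 1 else 0) := by
          intro j _
          have hWg := W_le_gmin_add ω hbal (i + j * ℓ) ℓ
          have hb1 : j = j1 → W ω (i + j1 * ℓ) ℓ ≤ g := by
            intro _; have := W_le_gmin_add ω hbal (i + j1 * ℓ) ℓ; omega
          have hb2 : j = j2 → W ω (i + j2 * ℓ) ℓ ≤ g := by
            intro _; have := W_le_gmin_add ω hbal (i + j2 * ℓ) ℓ; omega
          split_ifs with h1 h2 h2 <;> subst_vars <;> simp_all <;> omega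
        have hsum_le : ∑ j ∈ Finset.range m, (W ω (i + j * ℓ) ℓ : ℤ)
            ≤ ∑ j ∈ Finset.range m, (((g : ℤ) + 1)
              - (if j = j1 then 1 else 0) - (if j = j2 then 1 else 0)) :=
          Finset.sum_le_sum hupper
        have hev : ∑ j ∈ Finset.range m, (((g : ℤ) + 1)
              - (if j = j1 then 1 else 0) - (if j = j2 then 1 else 0))
            = (m : ℤ) * (g + 1) - 2 := by
          rw [Finset.sum_sub_distrib, Finset.sum_sub_distrib, Finset.sum_const,
            Finset.sum_ite_eq' (Finset.range m) j1 (fun _ => (1:ℤ)),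
            Finset.sum_ite_eq' (Finset.range m) j2 (fun _ => (1:ℤ))]
          have hj1 : j1 ∈ Finset.range m := Finset.mem_range.2 (by omega)
          have hj2 : j2 ∈ Finset.range m := Finset.mem_range.2 (by omega)
          simp [hj1, hj2, Finset.card_range]
          ring
        have hk := key i m
        rw [abs_le] at hk
        have hcast : (W ω i (m * ℓ) : ℤ) = ∑ j ∈ Finset.range m, (W ω (i + j * ℓ) ℓ : ℤ) := by
          rw [hsum]; push_cast; rfl
        rw [hcast] at hk
        have hPc : ((m : ℤ) * P) = m * (g + 1) := by rw [hc]
        omega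
      by_cases hex : ∃ j, W ω (i + j * ℓ) ℓ ≠ gmin ω ℓ + 1
      · obtain ⟨j0, hj0⟩ := hex
        exact ⟨j0 + 1, fun j hj => by
          by_contra hne
          exact one_exc j0 j (by omega) hj0 hne⟩
      · push_neg at hex
        exact ⟨0, fun j _ => hex j⟩
  -- assemble ultimate periodicity
  obtain ⟨c, _, hcl⟩ := hconst
  choose N hN using hcl
  set M := (Finset.range ℓ).sup (fun r => r + N r * ℓ) with hM
  have hWn : ∀ n, M ≤ n → W ω n ℓ = c := by
    intro n hn
    have hr : n % ℓ < ℓ := Nat.mod_lt _ hℓ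
    have hMle : n % ℓ + N (n % ℓ) * ℓ ≤ M :=
      Finset.le_sup (f := fun r => r + N r * ℓ) (Finset.mem_range.2 hr)
    have heq : n % ℓ + n / ℓ * ℓ = n := Nat.mod_add_div' n ℓ
    have hj : N (n % ℓ) ≤ n / ℓ := by
      have h1 : N (n % ℓ) * ℓ ≤ (n / ℓ) * ℓ := by omega
      exact Nat.le_of_mul_le_mul_right h1 hℓ
    have := hN (n % ℓ) (n / ℓ) hj
    rw [heq] at this
    exact this
  apply hap
  refine ⟨M, ℓ, hℓ, fun n hn => ?_⟩
  have e1 : W ω n (ℓ + 1) = W ω n ℓ + W ω (n + ℓ) 1 := W_add ω n ℓ 1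
  have e2 : W ω n (1 + ℓ) = W ω n 1 + W ω (n + 1) ℓ := W_add ω n 1 ℓ
  have e3 : (1 + ℓ) = (ℓ + 1) := by omega
  rw [e3] at e2
  have hc1 : W ω n ℓ = c := hWn n hn
  have hc2 : W ω (n + 1) ℓ = c := hWn (n + 1) (by omega)
  have : W ω (n + ℓ) 1 = W ω n 1 := by omega
  exact eq_of_W_one_eq ω (n + ℓ) n this


omit hbal in
theorem main (hap : ¬ UltimatelyPeriodic ω) (hbal : IsCBalanced ω 1)
    (k : ℕ) (hk : 1 ≤ k) :
    ∃ ℓ₁ ℓ₂ : ℕ, 0 < ℓ₁ ∧ 0 < ℓ₂ ∧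
      ∀ i : ℕ, AbelianPowerAt ω i k ℓ₁ ∨ AbelianPowerAt ω i k ℓ₂ := by
  classical
  set α := alpha ω with hα
  have hirr := alpha_not_int ω hbal hap
  have hk0 : (0:ℝ) < k := by exact_mod_cast hk
  set ε : ℝ := 1 / (4 * k) with hεdef
  have hε : 0 < ε := by positivity
  have hk1 : (1:ℝ) ≤ (k:ℝ) := by exact_mod_cast hk
  have hε2 : ε ≤ 1/2 := by
    rw [hεdef]
    rw [div_le_div_iff₀ (by positivity) (by norm_num)]
    nlinarith
  have hkε : (k:ℝ) * ε = 1/4 := by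
    rw [hεdef]; field_simp
  obtain ⟨ℓ₁, ℓ₂, hℓ₁, hℓ₂, hf1, hf2⟩ := StAux2.exists_both α hirr ε hε hε2
  set δ : ℝ := Int.fract ((ℓ₁ : ℝ) * α) with hδdef
  set η : ℝ := 1 - Int.fract ((ℓ₂ : ℝ) * α) with hηdef
  have hδ0 : 0 < δ := StAux2.fract_pos α hirr ℓ₁ hℓ₁
  have hδε : δ < ε := hf1
  have hη0 : 0 < η := by
    rw [hηdef]; have := Int.fract_lt_one ((ℓ₂ : ℝ) * α); linarith
  have hηε : η < ε := by rw [hηdef]; linarith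
  set F₁ : ℤ := ⌊(ℓ₁ : ℝ) * α⌋ with hF₁
  set F₂ : ℤ := ⌊(ℓ₂ : ℝ) * α⌋ with hF₂
  have hδeq : (ℓ₁ : ℝ) * α = (F₁ : ℝ) + δ := by
    rw [hF₁, hδdef]; linarith [Int.floor_add_fract ((ℓ₁ : ℝ) * α)]
  have hηeq : (ℓ₂ : ℝ) * α = (F₂ : ℝ) + 1 - η := by
    rw [hF₂, hηdef]; linarith [Int.floor_add_fract ((ℓ₂ : ℝ) * α)]
  -- two-value lemma
  have two_val : ∀ (ℓ : ℕ) (F : ℤ) (d : ℝ), (ℓ : ℝ) * α = (F : ℝ) + d → 0 < d → d < 1 →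
      ∀ m : ℕ, (W ω m ℓ : ℤ) = F ∨ (W ω m ℓ : ℤ) = F + 1 := by
    intro ℓ F d heq hd0 hd1 m
    have h := W_near ω hbal m ℓ
    rw [abs_le] at h
    rw [heq] at h
    set z : ℤ := (W ω m ℓ : ℤ) - F with hz
    have hzr : (z : ℝ) = (W ω m ℓ : ℝ) - (F : ℝ) := by push_cast [hz]; ring
    have h1 : (-1 : ℝ) < (z : ℝ) := by rw [hzr]; linarith
    have h2 : (z : ℝ) < 2 := by rw [hzr]; linarith
    have h1' : (-1 : ℤ) < z := by exact_mod_cast h1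
    have h2' : z < 2 := by exact_mod_cast h2
    omega
  have two_val₁ := two_val ℓ₁ F₁ δ hδeq hδ0 (by linarith)
  have two_val₂ := two_val ℓ₂ F₂ (1 - η) (by rw [hηeq]; ring) (by linarith) (by linarith)
  -- the key dichotomy at every position
  have key : ∀ i : ℕ, (∀ j : ℕ, j < k → (W ω (i + j * ℓ₁) ℓ₁ : ℤ) = F₁) ∨
      (∀ j : ℕ, j < k → (W ω (i + j * ℓ₂) ℓ₂ : ℤ) = F₂ + 1) := by
    intro i
    by_contra hcon
    push_neg at hcon
    obtain ⟨⟨j₁', hj₁', hne₁⟩, ⟨j₂', hj₂', hne₂⟩⟩ := hcon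
    have hex₁ : ∃ j : ℕ, j < k ∧ (W ω (i + j * ℓ₁) ℓ₁ : ℤ) = F₁ + 1 :=
      ⟨j₁', hj₁', by rcases two_val₁ (i + j₁' * ℓ₁) with h | h <;> omega⟩
    have hex₂ : ∃ j : ℕ, j < k ∧ (W ω (i + j * ℓ₂) ℓ₂ : ℤ) = F₂ :=
      ⟨j₂', hj₂', by rcases two_val₂ (i + j₂' * ℓ₂) with h | h <;> omega⟩
    set j₁ := Nat.find hex₁ with hj₁def
    set j₂ := Nat.find hex₂ with hj₂def
    obtain ⟨hj₁k, hW₁⟩ := Nat.find_spec hex₁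
    obtain ⟨hj₂k, hW₂⟩ := Nat.find_spec hex₂
    have hmin₁ : ∀ j : ℕ, j < j₁ → (W ω (i + j * ℓ₁) ℓ₁ : ℤ) = F₁ := by
      intro j hj
      have := Nat.find_min hex₁ hj
      rcases two_val₁ (i + j * ℓ₁) with h | h
      · exact h
      · exact absurd ⟨by omega, h⟩ this
    have hmin₂ : ∀ j : ℕ, j < j₂ → (W ω (i + j * ℓ₂) ℓ₂ : ℤ) = F₂ + 1 := by
      intro j hj
      have := Nat.find_min hex₂ hj
      rcases two_val₂ (i + j * ℓ₂) with h | h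
      · exact absurd ⟨by omega, h⟩ this
      · exact h
    -- sum identities
    set n₁ : ℕ := (j₁ + 1) * ℓ₁ with hn₁def
    set n₂ : ℕ := (j₂ + 1) * ℓ₂ with hn₂def
    have hA : (W ω i n₁ : ℤ) = (j₁ + 1 : ℤ) * F₁ + 1 := by
      have hs := W_mul ω i (j₁ + 1) ℓ₁
      rw [hn₁def, hs]
      push_cast
      rw [Finset.sum_range_succ]
      rw [Finset.sum_congr rfl (fun j hj => hmin₁ j (Finset.mem_range.1 hj))]
      rw [Finset.sum_const, Finset.card_range, hW₁]
      push_cast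
      ring
    have hB : (W ω i n₂ : ℤ) = (j₂ + 1 : ℤ) * (F₂ + 1) - 1 := by
      have hs := W_mul ω i (j₂ + 1) ℓ₂
      rw [hn₂def, hs]
      push_cast
      rw [Finset.sum_range_succ]
      rw [Finset.sum_congr rfl (fun j hj => hmin₂ j (Finset.mem_range.1 hj))]
      rw [Finset.sum_const, Finset.card_range, hW₂]
      push_cast
      ring
    -- the contradiction via the pair bound
    have hP := W_pair ω hbal i n₁ n₂
    rw [abs_le] at hP
    have hA' : (W ω i n₁ : ℝ) = ((j₁ : ℝ) + 1) * (F₁ : ℝ) + 1 := by exact_mod_cast hA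
    have hB' : (W ω i n₂ : ℝ) = ((j₂ : ℝ) + 1) * ((F₂ : ℝ) + 1) - 1 := by exact_mod_cast hB
    have e1 : ((n₁ : ℕ) : ℝ) = ((j₁ : ℝ) + 1) * (ℓ₁ : ℝ) := by rw [hn₁def]; push_cast; ring
    have e2 : ((n₂ : ℕ) : ℝ) = ((j₂ : ℝ) + 1) * (ℓ₂ : ℝ) := by rw [hn₂def]; push_cast; ring
    have hX : ((W ω i n₁ : ℝ) - (W ω i n₂ : ℝ)) - (((n₁ : ℕ) : ℝ) - ((n₂ : ℕ) : ℝ)) * α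
        = 2 - ((j₁ : ℝ) + 1) * δ - ((j₂ : ℝ) + 1) * η := by
      rw [hA', hB', e1, e2]
      linear_combination (-((j₁ : ℝ) + 1)) * hδeq + ((j₂ : ℝ) + 1) * hηeq
    have hj₁k' : ((j₁ : ℝ) + 1) ≤ (k : ℝ) := by exact_mod_cast hj₁k
    have hj₂k' : ((j₂ : ℝ) + 1) ≤ (k : ℝ) := by exact_mod_cast hj₂k
    have b1 : ((j₁ : ℝ) + 1) * δ < 1/4 := by
      have t1 : ((j₁ : ℝ) + 1) * δ ≤ (k : ℝ) * δ :=
        mul_le_mul_of_nonneg_right hj₁k' (le_of_lt hδ0)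
      have t2 : (k : ℝ) * δ < (k : ℝ) * ε := mul_lt_mul_of_pos_left hδε hk0
      linarith [hkε]
    have b2 : ((j₂ : ℝ) + 1) * η < 1/4 := by
      have t1 : ((j₂ : ℝ) + 1) * η ≤ (k : ℝ) * η :=
        mul_le_mul_of_nonneg_right hj₂k' (le_of_lt hη0)
      have t2 : (k : ℝ) * η < (k : ℝ) * ε := mul_lt_mul_of_pos_left hηε hk0
      linarith [hkε]
    have hple := hP.2
    have hα2 : alpha ω = α := rfl
    rw [hα2] at hple
    rw [hX] at hple
    clear_value α ε δ η F₁ F₂ j₁ j₂ n₁ n₂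
    linarith [hple, b1, b2]
  -- convert the dichotomy into abelian powers
  refine ⟨ℓ₁, ℓ₂, hℓ₁, hℓ₂, fun i => ?_⟩
  have wcount : ∀ (ℓ m₁ m₂ : ℕ), W ω m₁ ℓ = W ω m₂ ℓ → ∀ a : Fin 2,
      (factor ω m₁ ℓ).count a = (factor ω m₂ ℓ).count a := by
    intro ℓ m₁ m₂ hW a
    have ha : a = 0 ∨ a = 1 := by
      have := a.isLt
      rcases (by omega : a.val = 0 ∨ a.val = 1) with h | h
      · left; exact Fin.ext h
      · right; exact Fin.ext h
    have l1 := count_zero_add_count_one (factor ω m₁ ℓ)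
    have l2 := count_zero_add_count_one (factor ω m₂ ℓ)
    rw [factor_length] at l1 l2
    rcases ha with rfl | rfl
    · have e1 : (factor ω m₁ ℓ).count 1 = (factor ω m₂ ℓ).count 1 := hW
      omega
    · exact hW
  rcases key i with h | h
  · left
    refine ⟨hℓ₁, fun j₁' j₂' h1 h2 a => ?_⟩
    apply wcount
    have e1 := h j₁' h1
    have e2 := h j₂' h2
    omega
  · right
    refine ⟨hℓ₂, fun j₁' j₂' h1 h2 a => ?_⟩
    apply wcount
    have e1 := h j₁' h1
    have e2 := h j₂' h2
    omega


end StAux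

/-- For every Sturmian word `ω` (aperiodic balanced binary word) and every
`k ≥ 1`, there exist two positive integers `ℓ₁, ℓ₂` such that every position of
`ω` begins in an abelian `k`-power with abelian period `ℓ₁` or `ℓ₂`. -/
theorem sturmian_abelian_powers_everywhere
    (ω : ℕ → Fin 2) (hap : ¬ UltimatelyPeriodic ω) (hbal : IsCBalanced ω 1)
    (k : ℕ) (hk : 1 ≤ k) :
    ∃ ℓ₁ ℓ₂ : ℕ, 0 < ℓ₁ ∧ 0 < ℓ₂ ∧
      ∀ i : ℕ, AbelianPowerAt ω i k ℓ₁ ∨ AbelianPowerAt ω i k ℓ₂ := by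
  exact StAux.main ω hap hbal k hk
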